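/- Let b_n = (4^n − 1)/3, and say A ⊆ ℕ 'contains the i-th sub-block of the n-th block' if [b_n + i·2^n, b_n + (i+1)·2^n) ⊆ A and A ∩ [b_n, b_{n+1}) equals exactly that sub-block. Suppose A contains exactly one sub-block of the n-th block for infinitely many n. Then there exists a selection function (skip rule) f such that the selected sequence f(A) has upper density at least 1/3; in particular, for each such n, at a suitable finite stage s ≤ 3·2^n − 2, the number of 1's selected so far is at least 2^n while the number of 0's selected so far is at most 2(2^n − 1), giving proportion ≥ 1/3. -/

import Mathlib

open Filter Topology Classical

/-- `cnt A n = |A ∩ [0,n)|`. -/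
noncomputable def cnt (A : Set ℕ) (n : ℕ) : ℕ :=
  ((Finset.range n).filter (· ∈ A)).card

/-- `dens A n = |A ∩ [0,n)| / n`, the density of `A` at `n`. -/
noncomputable def dens (A : Set ℕ) (n : ℕ) : ℝ := (cnt A n : ℝ) / n

/-- A skip rule: given the finite history of (door, content) pairs observed so far,
it picks the next door, which must exceed the last door visited. -/
structure SkipRule where
  next : List (ℕ × Bool) → ℕ
  incr : ∀ (σ : List (ℕ × Bool)) (p : ℕ × Bool), next (σ ++ [p]) > p.1

/-- The history of the first `n` inspections of `A` by skip rule `R`. -/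
noncomputable def SkipRule.hist (R : SkipRule) (A : Set ℕ) : ℕ → List (ℕ × Bool)
  | 0 => []
  | n + 1 =>
      R.hist A n ++ [(R.next (R.hist A n), decide (R.next (R.hist A n) ∈ A))]

/-- The set of stages at which the bit selected by `R` from `A` is a `1`;
its density is the density of `1`s in the selected bit sequence `R(A)`. -/
noncomputable def SkipRule.selSet (R : SkipRule) (A : Set ℕ) : Set ℕ :=
  {m | R.next (R.hist A m) ∈ A}

/-- `b n = (4^n - 1)/3`, the left endpoint of the `n`-th ordered block. -/
def blockStart (n : ℕ) : ℕ := (4 ^ n - 1) / 3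

/-- `A` contains exactly one sub-block of the `n`-th ordered block:
`A ∩ [b_n, b_{n+1})` is exactly `[b_n + i·2^n, b_n + (i+1)·2^n)` for some `i < 2^n`. -/
def ContainsExactlyOneSubBlock (A : Set ℕ) (n : ℕ) : Prop :=
  ∃ i < 2 ^ n, A ∩ Set.Ico (blockStart n) (blockStart (n + 1)) =
    Set.Ico (blockStart n + i * 2 ^ n) (blockStart n + (i + 1) * 2 ^ n)

namespace SB

lemma bs_succ (n : ℕ) : blockStart (n + 1) = blockStart n + 4 ^ n := by
  have h4 : (4:ℕ)^(n+1) = 4 * 4^n := by ring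
  have h1 : (1:ℕ) ≤ 4^n := Nat.one_le_pow _ _ (by norm_num)
  have h2 : (4:ℕ)^(n+1) - 1 = (4^n - 1) + 3 * 4^n := by omega
  unfold blockStart
  rw [h2, Nat.add_mul_div_left _ _ (by norm_num : (0:ℕ) < 3)]

lemma bs_zero : blockStart 0 = 0 := rfl

lemma bs_lt (n : ℕ) : blockStart n < blockStart (n + 1) := by
  rw [bs_succ]; have : (1:ℕ) ≤ 4^n := Nat.one_le_pow _ _ (by norm_num); omega

lemma pow4 (n : ℕ) : (4:ℕ)^n = 2^n * 2^n := by
  rw [← pow_add, ← two_mul]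
  norm_num [pow_mul]

lemma exists_block (d : ℕ) : ∃ n, blockStart n ≤ d ∧ d < blockStart (n + 1) := by
  induction d with
  | zero => exact ⟨0, le_refl _, bs_lt 0⟩
  | succ d ih =>
    obtain ⟨n, h1, h2⟩ := ih
    rcases eq_or_lt_of_le (Nat.succ_le_of_lt h2) with h | h
    · exact ⟨n + 1, le_of_eq h.symm, by rw [show d+1 = blockStart (n+1) from h]; exact bs_lt (n+1)⟩
    · exact ⟨n, by omega, h⟩


/-- `binfo d = (blockStart n, 2^n)` where `n` is the block containing `d`. -/
def binfo : ℕ → ℕ × ℕ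
  | 0 => (0, 1)
  | d + 1 =>
    let q := binfo d
    if d + 1 = q.1 + q.2 * q.2 then (q.1 + q.2 * q.2, 2 * q.2) else q

lemma binfo_eq : ∀ d n, blockStart n ≤ d → d < blockStart (n + 1) →
    binfo d = (blockStart n, 2 ^ n) := by
  intro d
  induction d with
  | zero =>
    intro n h1 h2
    have hn : n = 0 := by
      by_contra hn
      have : 1 ≤ n := Nat.one_le_iff_ne_zero.mpr hn
      have : blockStart 1 ≤ blockStart n := by
        have := StrictMono.le_iff_le (f := blockStart) ?_ (a := 1) (b := n)
        · exact this.mpr ‹1 ≤ n›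
        · exact strictMono_nat_of_lt_succ bs_lt
      have hb1 : blockStart 1 = 1 := rfl
      omega
    subst hn
    simp [binfo, bs_zero]
  | succ d ih =>
    intro n h1 h2
    -- which block contains d?
    obtain ⟨m, hm1, hm2⟩ := exists_block d
    have hbd : binfo d = (blockStart m, 2 ^ m) := ih m hm1 hm2
    have hB : blockStart (m + 1) = blockStart m + 2 ^ m * 2 ^ m := by
      rw [bs_succ, pow4]
    by_cases hcase : d + 1 = blockStart (m + 1)
    · -- we move into block m+1, so n = m+1
      have hn : n = m + 1 := by
        have h3 : blockStart (m+1) ≤ d + 1 := le_of_eq hcase.symm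
        have h4 : d + 1 < blockStart (m + 2) := by
          rw [hcase]; exact bs_lt (m+1)
        -- blocks are disjoint increasing intervals
        by_contra hne
        rcases Nat.lt_or_ge n (m+1) with h | h
        · have : blockStart (n+1) ≤ blockStart (m+1) := by
            exact (strictMono_nat_of_lt_succ bs_lt).le_iff_le.mpr h
          omega
        · have : m + 2 ≤ n + 1 := by omega
          have : blockStart (m+2) ≤ blockStart n := by
            have := (strictMono_nat_of_lt_succ bs_lt).le_iff_le.mpr (show m + 2 ≤ n by omega)
            exact this
          omega
      subst hn
      show (if d + 1 = (binfo d).1 + (binfo d).2 * (binfo d).2 then _ else _) = _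
      rw [hbd]
      simp only []
      rw [if_pos (by simpa [← hB] using hcase)]
      rw [← hB, pow_succ, Nat.mul_comm]
    · -- stay in block m, so n = m
      have hd1 : d + 1 < blockStart (m + 1) := by omega
      have hn : n = m := by
        by_contra hne
        rcases Nat.lt_or_ge n m with h | h
        · have : blockStart (n+1) ≤ blockStart m := by
            exact (strictMono_nat_of_lt_succ bs_lt).le_iff_le.mpr h
          omega
        · have : blockStart (m+1) ≤ blockStart n :=
            (strictMono_nat_of_lt_succ bs_lt).le_iff_le.mpr (by omega)
          omega
      subst hn
      show (if d + 1 = (binfo d).1 + (binfo d).2 * (binfo d).2 then _ else _) = _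
      rw [hbd]
      simp only []
      rw [if_neg (by rw [← hB]; exact hcase)]

/-- The skip-rule step: from last inspected door `p.1` with observed bit `p.2`,
compute the next door. -/
def gstep (p : ℕ × Bool) : ℕ :=
  bif p.2 then
    (bif (p.1 - (binfo p.1).1) % (binfo p.1).2 + 1 == (binfo p.1).2
      then (binfo p.1).1 + (binfo p.1).2 * (binfo p.1).2 else p.1 + 1)
  else
    (bif (p.1 - (binfo p.1).1) % (binfo p.1).2 == 0
      then p.1 + (binfo p.1).2 else (binfo p.1).1 + (binfo p.1).2 * (binfo p.1).2)

lemma gstep_true {d n : ℕ} (h1 : blockStart n ≤ d) (h2 : d < blockStart (n + 1)) :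
    gstep (d, true) = if (d - blockStart n) % 2 ^ n + 1 = 2 ^ n
      then blockStart (n + 1) else d + 1 := by
  have hb : binfo d = (blockStart n, 2 ^ n) := binfo_eq d n h1 h2
  have hB : blockStart n + 2 ^ n * 2 ^ n = blockStart (n + 1) := by
    rw [bs_succ, pow4]
  simp only [gstep, hb, cond_true]
  by_cases h : (d - blockStart n) % 2 ^ n + 1 = 2 ^ n
  · simp [h, hB]
  · rw [show ((d - blockStart n) % 2 ^ n + 1 == 2 ^ n) = false from
        beq_eq_false_iff_ne.mpr h, cond_false, if_neg h]

lemma gstep_false {d n : ℕ} (h1 : blockStart n ≤ d) (h2 : d < blockStart (n + 1)) :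
    gstep (d, false) = if (d - blockStart n) % 2 ^ n = 0
      then d + 2 ^ n else blockStart (n + 1) := by
  have hb : binfo d = (blockStart n, 2 ^ n) := binfo_eq d n h1 h2
  have hB : blockStart n + 2 ^ n * 2 ^ n = blockStart (n + 1) := by
    rw [bs_succ, pow4]
  simp only [gstep, hb, cond_false]
  by_cases h : (d - blockStart n) % 2 ^ n = 0
  · simp [h]
  · rw [show ((d - blockStart n) % 2 ^ n == 0) = false from
        beq_eq_false_iff_ne.mpr h, cond_false, if_neg h]
    exact hB

lemma gstep_gt (p : ℕ × Bool) : gstep p > p.1 := by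
  obtain ⟨n, h1, h2⟩ := exists_block p.1
  have hp : (0:ℕ) < 2 ^ n := Nat.pow_pos (by norm_num)
  obtain ⟨d, b⟩ := p
  cases b
  · rw [show ((d, false) : ℕ × Bool).1 = d from rfl] at h1 h2 ⊢
    rw [gstep_false h1 h2]
    split <;> omega
  · rw [show ((d, true) : ℕ × Bool).1 = d from rfl] at h1 h2 ⊢
    rw [gstep_true h1 h2]
    split <;> omega

/-- The skip rule's next-door function. -/
def nextFn (σ : List (ℕ × Bool)) : ℕ :=
  match σ.reverse.head? with
  | none => 0
  | some p => gstep p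

lemma nextFn_nil : nextFn [] = 0 := rfl

lemma nextFn_concat (σ : List (ℕ × Bool)) (p : ℕ × Bool) :
    nextFn (σ ++ [p]) = gstep p := by
  simp [nextFn]

lemma primrec_binfo : Primrec binfo := by
  have hstep : Primrec₂ (fun (d : ℕ) (q : ℕ × ℕ) =>
      if d + 1 = q.1 + q.2 * q.2 then (q.1 + q.2 * q.2, 2 * q.2) else q) := by
    apply Primrec.ite
    · exact Primrec.eq.comp (Primrec.succ.comp Primrec.fst)
        (Primrec.nat_add.comp (Primrec.fst.comp Primrec.snd)
          (Primrec.nat_mul.comp (Primrec.snd.comp Primrec.snd)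
            (Primrec.snd.comp Primrec.snd)))
    · exact Primrec.pair
        (Primrec.nat_add.comp (Primrec.fst.comp Primrec.snd)
          (Primrec.nat_mul.comp (Primrec.snd.comp Primrec.snd)
            (Primrec.snd.comp Primrec.snd)))
        (Primrec.nat_mul.comp (Primrec.const 2) (Primrec.snd.comp Primrec.snd))
    · exact Primrec.snd
  have h := Primrec.nat_rec₁ ((0:ℕ), (1:ℕ)) hstep
  apply h.of_eq
  intro d
  induction d with
  | zero => rfl
  | succ d ih => simp [binfo, ← ih]

lemma primrec_gstep : Primrec gstep := by
  have hfst : Primrec (fun p : ℕ × Bool => p.1) := Primrec.fst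
  have hq : Primrec (fun p : ℕ × Bool => binfo p.1) := primrec_binfo.comp hfst
  have hq1 : Primrec (fun p : ℕ × Bool => (binfo p.1).1) := Primrec.fst.comp hq
  have hq2 : Primrec (fun p : ℕ × Bool => (binfo p.1).2) := Primrec.snd.comp hq
  have hj : Primrec (fun p : ℕ × Bool => (p.1 - (binfo p.1).1) % (binfo p.1).2) :=
    Primrec.nat_mod.comp (Primrec.nat_sub.comp hfst hq1) hq2
  have hB : Primrec (fun p : ℕ × Bool => (binfo p.1).1 + (binfo p.1).2 * (binfo p.1).2) :=
    Primrec.nat_add.comp hq1 (Primrec.nat_mul.comp hq2 hq2)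
  have hT : Primrec (fun p : ℕ × Bool =>
      bif (p.1 - (binfo p.1).1) % (binfo p.1).2 + 1 == (binfo p.1).2
        then (binfo p.1).1 + (binfo p.1).2 * (binfo p.1).2 else p.1 + 1) :=
    Primrec.cond (Primrec.beq.comp (Primrec.succ.comp hj) hq2) hB (Primrec.succ.comp hfst)
  have hF : Primrec (fun p : ℕ × Bool =>
      bif (p.1 - (binfo p.1).1) % (binfo p.1).2 == 0
        then p.1 + (binfo p.1).2 else (binfo p.1).1 + (binfo p.1).2 * (binfo p.1).2) :=
    Primrec.cond (Primrec.beq.comp hj (Primrec.const 0))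
      (Primrec.nat_add.comp hfst hq2) hB
  exact Primrec.cond Primrec.snd hT hF

lemma primrec_nextFn : Primrec nextFn := by
  have h : Primrec (fun σ : List (ℕ × Bool) => σ.reverse.head?) :=
    Primrec.list_head?.comp Primrec.list_reverse
  have := Primrec.option_casesOn h (Primrec.const 0)
    (primrec_gstep.comp Primrec.snd).to₂
  apply this.of_eq
  intro σ
  cases h : σ.reverse.head? <;> simp [nextFn, h]

/-- The adaptive skip rule. -/
def R : SkipRule :=
  ⟨nextFn, fun σ p => by rw [nextFn_concat]; exact gstep_gt p⟩

/-- The sequence of doors visited by `R` on `A`. -/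
noncomputable def traj (A : Set ℕ) : ℕ → ℕ
  | 0 => 0
  | m + 1 => gstep (traj A m, decide (traj A m ∈ A))

lemma hist_next (A : Set ℕ) (m : ℕ) : R.next (R.hist A m) = traj A m := by
  induction m with
  | zero => rfl
  | succ m ih =>
    show nextFn (R.hist A m ++ [(R.next (R.hist A m), decide (R.next (R.hist A m) ∈ A))])
      = traj A (m + 1)
    rw [nextFn_concat, ih]
    rfl

lemma selSet_eq (A : Set ℕ) : R.selSet A = {m | traj A m ∈ A} := by
  ext m
  simp [SkipRule.selSet, hist_next]

lemma traj_succ_mem {A : Set ℕ} {s : ℕ} (h : traj A s ∈ A) :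
    traj A (s + 1) = gstep (traj A s, true) := by
  show gstep (traj A s, decide (traj A s ∈ A)) = _
  rw [decide_eq_true h]

lemma traj_succ_not_mem {A : Set ℕ} {s : ℕ} (h : traj A s ∉ A) :
    traj A (s + 1) = gstep (traj A s, false) := by
  show gstep (traj A s, decide (traj A s ∈ A)) = _
  rw [decide_eq_false h]

lemma cnt_succ (A : Set ℕ) (s : ℕ) :
    cnt A (s + 1) = cnt A s + if s ∈ A then 1 else 0 := by
  unfold cnt
  rw [Finset.range_add_one, Finset.filter_insert]
  by_cases h : s ∈ A
  · rw [if_pos h, if_pos h, Finset.card_insert_of_notMem (by simp)]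
  · rw [if_neg h, if_neg h, Nat.add_zero]

lemma cnt_zero (A : Set ℕ) : cnt A 0 = 0 := by simp [cnt]

lemma cnt_le (A : Set ℕ) (s : ℕ) : cnt A s ≤ s := by
  calc cnt A s ≤ (Finset.range s).card := Finset.card_filter_le _ _
       _ = s := Finset.card_range s

/-- number of ones selected so far -/
noncomputable def ocnt (A : Set ℕ) (s : ℕ) : ℕ := cnt {m | traj A m ∈ A} s
/-- number of zeros selected so far -/
noncomputable def zcnt (A : Set ℕ) (s : ℕ) : ℕ := cnt {m | traj A m ∉ A} s

lemma ocnt_succ_mem {A : Set ℕ} {s : ℕ} (h : traj A s ∈ A) :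
    ocnt A (s + 1) = ocnt A s + 1 := by
  unfold ocnt
  rw [cnt_succ, if_pos (by simpa [Set.mem_setOf_eq] using h)]

lemma ocnt_succ_not_mem {A : Set ℕ} {s : ℕ} (h : traj A s ∉ A) :
    ocnt A (s + 1) = ocnt A s := by
  unfold ocnt
  rw [cnt_succ, if_neg (by simpa [Set.mem_setOf_eq] using h), Nat.add_zero]

lemma zcnt_succ_mem {A : Set ℕ} {s : ℕ} (h : traj A s ∈ A) :
    zcnt A (s + 1) = zcnt A s := by
  unfold zcnt
  rw [cnt_succ, if_neg (by simpa [Set.mem_setOf_eq] using h), Nat.add_zero]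

lemma zcnt_succ_not_mem {A : Set ℕ} {s : ℕ} (h : traj A s ∉ A) :
    zcnt A (s + 1) = zcnt A s + 1 := by
  unfold zcnt
  rw [cnt_succ, if_pos (by simpa [Set.mem_setOf_eq] using h)]

lemma ocnt_add_zcnt (A : Set ℕ) (s : ℕ) : ocnt A s + zcnt A s = s := by
  induction s with
  | zero => simp [ocnt, zcnt, cnt_zero]
  | succ s ih =>
    by_cases h : traj A s ∈ A
    · rw [ocnt_succ_mem h, zcnt_succ_mem h]; omega
    · rw [ocnt_succ_not_mem h, zcnt_succ_not_mem h]; omega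

/-- The block-traversal lemma: inside block `n`, the rule reaches the start of
block `n+1` while selecting a controlled number of zeros. -/
lemma traverse (A : Set ℕ) (n : ℕ) : ∀ k s, blockStart (n + 1) - traj A s ≤ k →
    blockStart n ≤ traj A s → traj A s < blockStart (n + 1) →
    ∃ t, s < t ∧ traj A t = blockStart (n + 1) ∧
      zcnt A t ≤ zcnt A s + (if (traj A s - blockStart n) % 2 ^ n = 0
        then 2 ^ n - (traj A s - blockStart n) / 2 ^ n else 1) := by
  intro k
  induction k with
  | zero => intro s hk h1 h2; omega
  | succ k ih =>
    intro s hk h1 h2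
    have hp : (0:ℕ) < 2 ^ n := Nat.pow_pos (by norm_num)
    set p := 2 ^ n with hpdef
    set d := traj A s with hd
    set r := d - blockStart n with hrdef
    set j := r % p with hjdef
    set i := r / p with hidef
    have hbs : blockStart (n + 1) = blockStart n + p * p := by rw [bs_succ, pow4]
    have hr4 : r < p * p := by omega
    have hjlt : j < p := Nat.mod_lt _ hp
    have hilt : i < p := Nat.div_lt_iff_lt_mul hp |>.mpr (by omega)
    have hdm : p * i + j = r := Nat.div_add_mod r p
    by_cases hA : d ∈ A
    · -- bit is 1
      have ht1 : traj A (s + 1) = if j + 1 = p then blockStart (n + 1) else d + 1 := by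
        rw [traj_succ_mem hA, gstep_true h1 h2]
      have hz1 : zcnt A (s + 1) = zcnt A s := zcnt_succ_mem hA
      by_cases hj1 : j + 1 = p
      · refine ⟨s + 1, Nat.lt_succ_self _, by rw [ht1, if_pos hj1], ?_⟩
        rw [hz1]; exact Nat.le_add_right _ _
      · have ht2 : traj A (s + 1) = d + 1 := by rw [ht1, if_neg hj1]
        have hlt : d + 1 < blockStart (n + 1) := by
          by_contra hc
          have he : d + 1 = blockStart (n + 1) := by omega
          have hr1 : r + 1 = p * p := by omega
          have hm0 : (r + 1) % p = 0 := by rw [hr1]; exact Nat.mul_mod_right p p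
          have hm1 : r + 1 = p * i + (j + 1) := by omega
          have hm2 : (r + 1) % p = j + 1 := by
            rw [hm1, Nat.mul_add_mod]
            exact Nat.mod_eq_of_lt (by omega)
          omega
        have hge : blockStart n ≤ d + 1 := by omega
        obtain ⟨t, htt, htraj, hzc⟩ := ih (s + 1) (by omega) (by rw [ht2]; exact hge)
          (by rw [ht2]; exact hlt)
        refine ⟨t, by omega, htraj, ?_⟩
        have hrr : traj A (s + 1) - blockStart n = r + 1 := by rw [ht2]; omega
        have hjj : (r + 1) % p = j + 1 := by
          have : r + 1 = p * i + (j + 1) := by omega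
          rw [this, Nat.mul_add_mod]
          exact Nat.mod_eq_of_lt (by omega)
        rw [hrr, hjj] at hzc
        rw [if_neg (by omega)] at hzc
        rw [hz1] at hzc
        -- goal: zcnt t ≤ zcnt s + Z, Z ≥ 1
        by_cases hj0 : j = 0
        · rw [if_pos hj0]; omega
        · rw [if_neg hj0]; omega
    · -- bit is 0
      have ht1 : traj A (s + 1) = if j = 0 then d + p else blockStart (n + 1) := by
        rw [traj_succ_not_mem hA, gstep_false h1 h2]
      have hz1 : zcnt A (s + 1) = zcnt A s + 1 := zcnt_succ_not_mem hA
      by_cases hj0 : j = 0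
      · have hri : r = p * i := by omega
        have hmul : p * (i + 1) = p * i + p := Nat.mul_succ p i
        have ht2 : traj A (s + 1) = d + p := by rw [ht1, if_pos hj0]
        by_cases hi1 : i + 1 = p
        · -- jump lands exactly on the next block start
          have h6 : p * (i + 1) = p * p := by rw [hi1]
          have hre : d + p = blockStart (n + 1) := by omega
          refine ⟨s + 1, Nat.lt_succ_self _, by rw [ht2, hre], ?_⟩
          rw [hz1, if_pos hj0]
          omega
        · have hi2 : i + 1 < p := by omega
          have h7 : p * (i + 1) < p * p := by
            exact Nat.mul_lt_mul_of_le_of_lt (le_refl p) hi2 hp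
          have hlt : d + p < blockStart (n + 1) := by omega
          have hge : blockStart n ≤ d + p := by omega
          obtain ⟨t, htt, htraj, hzc⟩ := ih (s + 1)
            (by rw [ht2]; omega) (by rw [ht2]; exact hge) (by rw [ht2]; exact hlt)
          refine ⟨t, by omega, htraj, ?_⟩
          have hrr : traj A (s + 1) - blockStart n = p * (i + 1) := by
            rw [ht2]; omega
          have hjj : (p * (i + 1)) % p = 0 := Nat.mul_mod_right p _
          have hii : (p * (i + 1)) / p = i + 1 := Nat.mul_div_cancel_left _ hp
          rw [hrr, hjj, hii] at hzc
          rw [if_pos rfl] at hzc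
          rw [hz1] at hzc
          rw [if_pos hj0]
          omega
      · refine ⟨s + 1, Nat.lt_succ_self _, by rw [ht1, if_neg hj0], ?_⟩
        rw [hz1, if_neg hj0]

lemma traj_zero (A : Set ℕ) : traj A 0 = 0 := rfl

lemma entry (A : Set ℕ) : ∀ n, ∃ s, traj A s = blockStart n ∧ zcnt A s ≤ 2 ^ n - 1 := by
  intro n
  induction n with
  | zero => exact ⟨0, rfl, by simp [zcnt, cnt_zero]⟩
  | succ n ih =>
    obtain ⟨s, hs, hz⟩ := ih
    obtain ⟨t, _, ht, hzt⟩ := traverse A n (blockStart (n + 1) - traj A s) s (le_refl _)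
      (by rw [hs]) (by rw [hs]; exact bs_lt n)
    refine ⟨t, ht, ?_⟩
    rw [hs] at hzt
    rw [Nat.sub_self, Nat.zero_mod, if_pos rfl, Nat.zero_div, Nat.sub_zero] at hzt
    have hp : (1:ℕ) ≤ 2 ^ n := Nat.one_le_pow _ _ (by norm_num)
    have hps : (2:ℕ) ^ (n + 1) = 2 * 2 ^ n := by ring
    omega

lemma goodBlock (A : Set ℕ) (n s : ℕ) (hs : traj A s = blockStart n)
    (h : ContainsExactlyOneSubBlock A n) :
    ∃ t, 2 ^ n ≤ ocnt A t ∧ zcnt A t ≤ zcnt A s + (2 ^ n - 1) := by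
  obtain ⟨i, hi, hset⟩ := h
  have hp : (0:ℕ) < 2 ^ n := Nat.pow_pos (by norm_num)
  set p := 2 ^ n with hpdef
  have hbs : blockStart (n + 1) = blockStart n + p * p := by rw [bs_succ, pow4]
  -- fact (a): doors at the start of sub-blocks before sub-block i are not in A
  have hfa : ∀ k, k < i → blockStart n + k * p ∉ A := by
    intro k hk hmem
    have hin : blockStart n + k * p ∈ A ∩ Set.Ico (blockStart n) (blockStart (n + 1)) := by
      refine ⟨hmem, ⟨Nat.le_add_right _ _, ?_⟩⟩
      have h8 : k * p < p * p := mul_lt_mul_of_pos_right (by omega) hp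
      omega
    rw [hset] at hin
    have := hin.1
    have : i * p ≤ k * p := by omega
    have := Nat.le_of_mul_le_mul_right this hp
    omega
  -- fact (b): all doors of sub-block i are in A
  have hfb : ∀ j, j < p → blockStart n + i * p + j ∈ A := by
    intro j hj
    have hin : blockStart n + i * p + j ∈
        Set.Ico (blockStart n + i * p) (blockStart n + (i + 1) * p) := by
      constructor
      · omega
      · have : (i + 1) * p = i * p + p := by ring
        omega
    rw [← hset] at hin
    exact hin.1
  -- phase 1: scan the first bits of sub-blocks 0..i-1 (all zeros)
  have phase1 : ∀ k, k ≤ i → ∃ s', traj A s' = blockStart n + k * p ∧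
      zcnt A s' = zcnt A s + k ∧ ocnt A s' = ocnt A s := by
    intro k
    induction k with
    | zero => exact fun _ => ⟨s, by simpa using hs, by simp, rfl⟩
    | succ k ihk =>
      intro hk
      obtain ⟨s', h1, h2, h3⟩ := ihk (by omega)
      have hklt : k < i := by omega
      have hnotA : traj A s' ∉ A := by rw [h1]; exact hfa k hklt
      have hble : blockStart n ≤ traj A s' := by rw [h1]; omega
      have hblt : traj A s' < blockStart (n + 1) := by
        rw [h1]
        have h8 : k * p < p * p := mul_lt_mul_of_pos_right (by omega) hp
        omega
      have hstep : traj A (s' + 1) = if (traj A s' - blockStart n) % p = 0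
          then traj A s' + p else blockStart (n + 1) := by
        rw [traj_succ_not_mem hnotA]
        exact gstep_false hble hblt
      have hmod : (traj A s' - blockStart n) % p = 0 := by
        rw [h1]
        have h9 : blockStart n + k * p - blockStart n = p * k := by
          rw [Nat.mul_comm]; omega
        rw [h9, Nat.mul_mod_right]
      refine ⟨s' + 1, ?_, ?_, ?_⟩
      · rw [hstep, if_pos hmod, h1]; ring
      · rw [zcnt_succ_not_mem hnotA, h2]; omega
      · rw [ocnt_succ_not_mem hnotA, h3]
  obtain ⟨s1, hs1, hz1, ho1⟩ := phase1 i (le_refl i)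
  -- phase 2: read through sub-block i (all ones)
  have phase2 : ∀ j, j < p → ∃ t, traj A t = blockStart n + i * p + j ∧
      zcnt A t = zcnt A s1 ∧ ocnt A t = ocnt A s1 + j := by
    intro j
    induction j with
    | zero => exact fun _ => ⟨s1, by simpa using hs1, rfl, rfl⟩
    | succ j ihj =>
      intro hj
      obtain ⟨t, h1, h2, h3⟩ := ihj (by omega)
      have hmemA : traj A t ∈ A := by rw [h1]; exact hfb j (by omega)
      have hble : blockStart n ≤ traj A t := by rw [h1]; omega
      have hblt : traj A t < blockStart (n + 1) := by
        rw [h1]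
        have hip : i * p + p ≤ p * p := by
          have : (i + 1) * p ≤ p * p := Nat.mul_le_mul_right p hi
          have h9 : (i + 1) * p = i * p + p := by ring
          omega
        omega
      have hstep : traj A (t + 1) = if (traj A t - blockStart n) % p + 1 = p
          then blockStart (n + 1) else traj A t + 1 := by
        rw [traj_succ_mem hmemA]
        exact gstep_true hble hblt
      have hmod : (traj A t - blockStart n) % p = j := by
        rw [h1]
        have : blockStart n + i * p + j - blockStart n = p * i + j := by
          rw [Nat.mul_comm]; omega
        rw [this, Nat.mul_add_mod]
        exact Nat.mod_eq_of_lt (by omega)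
      refine ⟨t + 1, ?_, ?_, ?_⟩
      · rw [hstep, hmod, if_neg (by omega), h1]; omega
      · rw [zcnt_succ_mem hmemA, h2]
      · rw [ocnt_succ_mem hmemA, h3]; omega
  obtain ⟨t, h1, h2, h3⟩ := phase2 (p - 1) (by omega)
  have hmemA : traj A t ∈ A := by rw [h1]; exact hfb (p - 1) (by omega)
  refine ⟨t + 1, ?_, ?_⟩
  · rw [ocnt_succ_mem hmemA, h3]; omega
  · rw [zcnt_succ_mem hmemA, h2, hz1]; omega

end SB

theorem stmt7 (A : Set ℕ)
    (hA : {n | ContainsExactlyOneSubBlock A n}.Infinite) :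
    ∃ R : SkipRule, Computable R.next ∧
      (1 : ℝ) / 3 ≤ limsup (dens (R.selSet A)) atTop := by
  refine ⟨SB.R, SB.primrec_nextFn.to_comp, ?_⟩
  rw [show SB.R.selSet A = {m | SB.traj A m ∈ A} from SB.selSet_eq A]
  have hbdd : IsBoundedUnder (· ≤ ·) atTop (dens {m | SB.traj A m ∈ A}) := by
    apply isBoundedUnder_of
    refine ⟨1, fun s => ?_⟩
    unfold dens
    rcases Nat.eq_zero_or_pos s with h | h
    · subst h; simp
    · rw [div_le_one (by exact_mod_cast h)]
      exact_mod_cast SB.cnt_le _ s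
  refine le_limsup_of_frequently_le ?_ hbdd
  rw [frequently_atTop]
  intro N
  obtain ⟨n, hn, hNn⟩ := hA.exists_gt N
  obtain ⟨s, hsb, hz⟩ := SB.entry A n
  obtain ⟨T, hoT, hzT⟩ := SB.goodBlock A n s hsb hn
  have hT1 : SB.ocnt A T + SB.zcnt A T = T := SB.ocnt_add_zcnt A T
  have h2n : n < 2 ^ n := Nat.lt_two_pow_self
  refine ⟨T, by omega, ?_⟩
  have hN3 : T ≤ 3 * SB.ocnt A T := by omega
  have hTpos : 0 < T := by omega
  unfold dens
  rw [show cnt {m | SB.traj A m ∈ A} T = SB.ocnt A T from rfl]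
  rw [div_le_div_iff₀ (by norm_num) (by exact_mod_cast hTpos)]
  calc (1:ℝ) * T = T := one_mul _
    _ ≤ 3 * SB.ocnt A T := by exact_mod_cast hN3
    _ = SB.ocnt A T * 3 := by ring
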